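/- Let G be a symmetric network congestion game on a series-parallel graph. For every global minimizer A of the Rosenthal potential Φ over all outcomes, there exists a 1-lookahead outcome B of G with the same congestion vector, x(B) = x(A). Consequently, the set of congestion vectors of 1-lookahead outcomes equals the set of congestion vectors of global minimizers of Φ. -/

import Mathlib

/-- A congestion game with `n` players on a finite resource type `R`:
each player has a finite set of actions (each action a set of resources),
and each resource has a delay function `ℕ → ℝ`. -/
structure CGame (R : Type) [DecidableEq R] [Fintype R] (n : ℕ) where
  actions : Fin n → Finset (Finset R)
  delay : R → ℕ → ℝ

namespace CGame

variable {R : Type} [DecidableEq R] [Fintype R] {n : ℕ}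

/-- The congestion `x(A)_r`: number of players using resource `r` in profile `A`. -/
def congestion (_G : CGame R n) (A : Fin n → Finset R) (r : R) : ℕ :=
  (Finset.univ.filter fun i => r ∈ A i).card

/-- The cost of player `i` in profile `A`. -/
def cost (G : CGame R n) (A : Fin n → Finset R) (i : Fin n) : ℝ :=
  ∑ r ∈ A i, G.delay r (G.congestion A r)

/-- `A` is an outcome: each player plays one of his actions. -/
def IsOutcome (G : CGame R n) (A : Fin n → Finset R) : Prop :=
  ∀ i, A i ∈ G.actions i

/-- `A` is a (pure) Nash equilibrium. -/
def IsNash (G : CGame R n) (A : Fin n → Finset R) : Prop :=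
  G.IsOutcome A ∧ ∀ i, ∀ B ∈ G.actions i, G.cost A i ≤ G.cost (Function.update A i B) i

/-- The subgame induced by the first player playing `a`. -/
def subgame (G : CGame R (n + 1)) (a : Finset R) : CGame R n where
  actions := fun i => G.actions i.succ
  delay := fun r y => G.delay r (y + if r ∈ a then 1 else 0)

/-- The subgame induced by the first `m` players playing `P`. -/
def subgameMany {m k : ℕ} (G : CGame R (m + k)) (P : Fin m → Finset R) : CGame R k where
  actions := fun i => G.actions (Fin.natAdd m i)
  delay := fun r y => G.delay r (y + (Finset.univ.filter fun i : Fin m => r ∈ P i).card)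

/-- `G^k`: the game on the first `min k n` players. -/
def truncate (G : CGame R n) (k : ℕ) : CGame R (min k n) where
  actions := fun i => G.actions (Fin.castLE (min_le_right k n) i)
  delay := G.delay

/-- The game reordered so that the player in position `i` is player `σ i`. -/
def reorder (G : CGame R n) (σ : Equiv.Perm (Fin n)) : CGame R n where
  actions := fun i => G.actions (σ i)
  delay := G.delay

/-- Subgame-perfect outcomes with respect to the order `1, …, n`. -/
def IsSPO : {n : ℕ} → CGame R n → (Fin n → Finset R) → Prop
  | 0, _, _ => True
  | _ + 1, G, A =>
      A 0 ∈ G.actions 0 ∧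
      ∃ f : Finset R → (Fin _ → Finset R),
        (∀ a ∈ G.actions 0, IsSPO (G.subgame a) (f a)) ∧
        f (A 0) = Fin.tail A ∧
        ∀ a ∈ G.actions 0,
          G.cost (Fin.cons (A 0) (f (A 0))) 0 ≤ G.cost (Fin.cons a (f a)) 0

/-- `k`-lookahead outcomes with respect to the order `1, …, n`. -/
def IsKLA (k : ℕ) : {n : ℕ} → CGame R n → (Fin n → Finset R) → Prop
  | 0, _, _ => True
  | n + 1, G, A =>
      (∃ (hk : 0 < min k (n + 1)) (B : Fin (min k (n + 1)) → Finset R),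
          IsSPO (G.truncate k) B ∧ B ⟨0, hk⟩ = A 0) ∧
      IsKLA k (G.subgame (A 0)) (Fin.tail A)

/-- `A` is a subgame-perfect outcome of `G` with respect to some order of the players. -/
def IsSPOutcome (G : CGame R n) (A : Fin n → Finset R) : Prop :=
  ∃ σ : Equiv.Perm (Fin n), IsSPO (G.reorder σ) (A ∘ σ)

/-- `A` is a `k`-lookahead outcome of `G` with respect to some order of the players. -/
def IsKLO (k : ℕ) (G : CGame R n) (A : Fin n → Finset R) : Prop :=
  ∃ σ : Equiv.Perm (Fin n), IsKLA k (G.reorder σ) (A ∘ σ)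

/-- The cost of player `i` when only the players in `s` play (profile restricted to `s`). -/
def costOn (G : CGame R n) (s : Finset (Fin n)) (A : Fin n → Finset R) (i : Fin n) : ℝ :=
  ∑ r ∈ A i, G.delay r ((s.filter fun j => r ∈ A j).card)

/-- `G` is generic: in every restriction of the game to a subset of the players,
a player's cost changes whenever his own action changes. -/
def Generic (G : CGame R n) : Prop :=
  ∀ s : Finset (Fin n), ∀ A B : Fin n → Finset R,
    (∀ i ∈ s, A i ∈ G.actions i) → (∀ i ∈ s, B i ∈ G.actions i) →
    ∀ j ∈ s, A j ≠ B j → G.costOn s A j ≠ G.costOn s B j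

/-- Utilitarian social cost. -/
def SC (G : CGame R n) (A : Fin n → Finset R) : ℝ :=
  ∑ i, G.cost A i

/-- Minimum social cost over all outcomes. -/
noncomputable def optSC (G : CGame R n) : ℝ :=
  sInf {y | ∃ A, G.IsOutcome A ∧ y = G.SC A}

/-- The `k`-Lookahead Price of Anarchy. -/
noncomputable def kLPoA (G : CGame R n) (k : ℕ) : ℝ :=
  sSup {y | ∃ A, IsKLO k G A ∧ y = G.SC A / G.optSC}

/-- The Price of Anarchy. -/
noncomputable def PoA (G : CGame R n) : ℝ :=
  sSup {y | ∃ A, G.IsNash A ∧ y = G.SC A / G.optSC}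

/-- Opportunity cost `O_A` of an outcome `A` in a symmetric game with action set `𝒜`. -/
noncomputable def oppCost (G : CGame R n) (𝒜 : Finset (Finset R)) (A : Fin n → Finset R) : ℝ :=
  sInf {y | ∃ P ∈ 𝒜, y = ∑ r ∈ P, G.delay r (G.congestion A r + 1)}

/-- Worst cost (egalitarian social cost) `W_A` of an outcome `A`. -/
noncomputable def worstCost (G : CGame R n) (A : Fin n → Finset R) : ℝ :=
  sSup {y | ∃ i, y = G.cost A i}

/-- Rosenthal's potential function. -/
def potential (G : CGame R n) (A : Fin n → Finset R) : ℝ :=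
  ∑ r : R, ∑ i ∈ Finset.Icc 1 (G.congestion A r), G.delay r i

end CGame
/-- Syntax trees of extension-parallel graphs: a single arc; parallel composition;
series composition of a single arc with an EP graph (arc first or arc last). -/
inductive EPTree : Type
  | edge : EPTree
  | parallel : EPTree → EPTree → EPTree
  | extHead : EPTree → EPTree
  | extTail : EPTree → EPTree

namespace EPTree

/-- The arcs of an extension-parallel graph. -/
def Arc : EPTree → Type
  | edge => Unit
  | parallel t₁ t₂ => t₁.Arc ⊕ t₂.Arc
  | extHead t => Unit ⊕ t.Arc
  | extTail t => t.Arc ⊕ Unit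

def arcDecEq : (t : EPTree) → DecidableEq t.Arc
  | edge => inferInstanceAs (DecidableEq Unit)
  | parallel t₁ t₂ =>
      letI := t₁.arcDecEq; letI := t₂.arcDecEq
      inferInstanceAs (DecidableEq (t₁.Arc ⊕ t₂.Arc))
  | extHead t =>
      letI := t.arcDecEq
      inferInstanceAs (DecidableEq (Unit ⊕ t.Arc))
  | extTail t =>
      letI := t.arcDecEq
      inferInstanceAs (DecidableEq (t.Arc ⊕ Unit))

instance (t : EPTree) : DecidableEq t.Arc := t.arcDecEq

def arcFintype : (t : EPTree) → Fintype t.Arc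
  | edge => inferInstanceAs (Fintype Unit)
  | parallel t₁ t₂ =>
      letI := t₁.arcFintype; letI := t₂.arcFintype
      inferInstanceAs (Fintype (t₁.Arc ⊕ t₂.Arc))
  | extHead t =>
      letI := t.arcFintype
      inferInstanceAs (Fintype (Unit ⊕ t.Arc))
  | extTail t =>
      letI := t.arcFintype
      inferInstanceAs (Fintype (t.Arc ⊕ Unit))

instance (t : EPTree) : Fintype t.Arc := t.arcFintype

/-- The set of arc sets of directed `o`–`d` paths of an extension-parallel graph. -/
def paths : (t : EPTree) → Finset (Finset t.Arc)
  | edge => {(Finset.univ : Finset Unit)}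
  | parallel t₁ t₂ =>
      (t₁.paths.image fun P => P.image Sum.inl) ∪ (t₂.paths.image fun P => P.image Sum.inr)
  | extHead t => t.paths.image fun P => insert (Sum.inl ()) (P.image Sum.inr)
  | extTail t => t.paths.image fun P => insert (Sum.inr ()) (P.image Sum.inl)

end EPTree

/-- Syntax trees of series-parallel graphs: a single arc; series composition;
parallel composition. -/
inductive SPTree : Type
  | edge : SPTree
  | series : SPTree → SPTree → SPTree
  | parallel : SPTree → SPTree → SPTree

namespace SPTree

/-- The arcs of a series-parallel graph. -/
def Arc : SPTree → Type
  | edge => Unit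
  | series t₁ t₂ => t₁.Arc ⊕ t₂.Arc
  | parallel t₁ t₂ => t₁.Arc ⊕ t₂.Arc

def arcDecEq : (t : SPTree) → DecidableEq t.Arc
  | edge => inferInstanceAs (DecidableEq Unit)
  | series t₁ t₂ =>
      letI := t₁.arcDecEq; letI := t₂.arcDecEq
      inferInstanceAs (DecidableEq (t₁.Arc ⊕ t₂.Arc))
  | parallel t₁ t₂ =>
      letI := t₁.arcDecEq; letI := t₂.arcDecEq
      inferInstanceAs (DecidableEq (t₁.Arc ⊕ t₂.Arc))

instance (t : SPTree) : DecidableEq t.Arc := t.arcDecEq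

def arcFintype : (t : SPTree) → Fintype t.Arc
  | edge => inferInstanceAs (Fintype Unit)
  | series t₁ t₂ =>
      letI := t₁.arcFintype; letI := t₂.arcFintype
      inferInstanceAs (Fintype (t₁.Arc ⊕ t₂.Arc))
  | parallel t₁ t₂ =>
      letI := t₁.arcFintype; letI := t₂.arcFintype
      inferInstanceAs (Fintype (t₁.Arc ⊕ t₂.Arc))

instance (t : SPTree) : Fintype t.Arc := t.arcFintype

/-- The set of arc sets of directed `o`–`d` paths of a series-parallel graph. -/
def paths : (t : SPTree) → Finset (Finset t.Arc)
  | edge => {(Finset.univ : Finset Unit)}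
  | series t₁ t₂ =>
      (t₁.paths ×ˢ t₂.paths).image fun p => p.1.image Sum.inl ∪ p.2.image Sum.inr
  | parallel t₁ t₂ =>
      (t₁.paths.image fun P => P.image Sum.inl) ∪ (t₂.paths.image fun P => P.image Sum.inr)

/-- A series-parallel graph is extension-parallel if in every series composition one of
the two parts is a single arc. -/
def IsEP : SPTree → Prop
  | edge => True
  | series t₁ t₂ => (t₁ = edge ∧ t₂.IsEP) ∨ (t₂ = edge ∧ t₁.IsEP)
  | parallel t₁ t₂ => t₁.IsEP ∧ t₂.IsEP

end SPTree

/-- The symmetric network congestion game with `n` players on an extension-parallel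
graph `t` with delay functions `d`. -/
def SNCGep (t : EPTree) (d : t.Arc → ℕ → ℝ) (n : ℕ) : CGame t.Arc n where
  actions := fun _ => t.paths
  delay := d

/-- The symmetric network congestion game with `n` players on a series-parallel
graph `t` with delay functions `d`. -/
def SNCGsp (t : SPTree) (d : t.Arc → ℕ → ℝ) (n : ℕ) : CGame t.Arc n where
  actions := fun _ => t.paths
  delay := d


namespace SPGames

open SPTree Finset

/-- Indicator of a finset. -/
def ind {α : Type} [DecidableEq α] (P : Finset α) (r : α) : ℕ := if r ∈ P then 1 else 0

lemma ind_congr {α β : Type} [DecidableEq α] [DecidableEq β] {P : Finset α} {Q : Finset β}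
    {r : α} {s : β} (h : (r ∈ P) ↔ (s ∈ Q)) : ind P r = ind Q s := if_congr h rfl rfl

lemma ind_eq_zero {α : Type} [DecidableEq α] {P : Finset α} {r : α} (h : r ∉ P) :
    ind P r = 0 := if_neg h

lemma ind_eq_one {α : Type} [DecidableEq α] {P : Finset α} {r : α} (h : r ∈ P) :
    ind P r = 1 := if_pos h

/-- Series union with fixed instances. -/
def serUnion {t₁ t₂ : SPTree} (P₁ : Finset t₁.Arc) (P₂ : Finset t₂.Arc) :
    Finset (SPTree.series t₁ t₂).Arc := P₁.image Sum.inl ∪ P₂.image Sum.inr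

def parLeft {t₁ t₂ : SPTree} (P₁ : Finset t₁.Arc) : Finset (SPTree.parallel t₁ t₂).Arc :=
  P₁.image Sum.inl

def parRight {t₁ t₂ : SPTree} (P₂ : Finset t₂.Arc) : Finset (SPTree.parallel t₁ t₂).Arc :=
  P₂.image Sum.inr

/-- Integral `o`–`d` flows of value `m`, defined recursively on the SP tree. -/
def Flow : (t : SPTree) → ℕ → (t.Arc → ℕ) → Prop
  | .edge, m, x => ∀ r, x r = m
  | .series t₁ t₂, m, x =>
      Flow t₁ m (fun a => x (Sum.inl a)) ∧ Flow t₂ m (fun a => x (Sum.inr a))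
  | .parallel t₁ t₂, m, x =>
      ∃ m₁ m₂, m₁ + m₂ = m ∧ Flow t₁ m₁ (fun a => x (Sum.inl a)) ∧
        Flow t₂ m₂ (fun a => x (Sum.inr a))

lemma mem_paths_series {t₁ t₂ : SPTree} {P : Finset (SPTree.series t₁ t₂).Arc} :
    P ∈ (SPTree.series t₁ t₂).paths ↔
      ∃ P₁ ∈ t₁.paths, ∃ P₂ ∈ t₂.paths,
        P = serUnion P₁ P₂ := by
  simp only [SPTree.paths, Finset.mem_image, Finset.mem_product, Prod.exists, serUnion]
  constructor
  · rintro ⟨a, b, ⟨h1, h2⟩, rfl⟩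
    exact ⟨a, h1, b, h2, rfl⟩
  · rintro ⟨a, h1, b, h2, hh⟩
    exact ⟨a, b, ⟨h1, h2⟩, hh.symm⟩

lemma mem_paths_parallel {t₁ t₂ : SPTree} {P : Finset (SPTree.parallel t₁ t₂).Arc} :
    P ∈ (SPTree.parallel t₁ t₂).paths ↔
      (∃ P₁ ∈ t₁.paths, P = parLeft P₁) ∨ (∃ P₂ ∈ t₂.paths, P = parRight P₂) := by
  simp only [SPTree.paths, Finset.mem_union, Finset.mem_image, parLeft, parRight]
  constructor
  · rintro (⟨a, ha, rfl⟩ | ⟨b, hb, rfl⟩)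
    · exact Or.inl ⟨a, ha, rfl⟩
    · exact Or.inr ⟨b, hb, rfl⟩
  · rintro (⟨a, ha, ha'⟩ | ⟨b, hb, hb'⟩)
    · exact Or.inl ⟨a, ha, ha'.symm⟩
    · exact Or.inr ⟨b, hb, hb'.symm⟩

lemma inl_mem_union_images {t₁ t₂ : SPTree} {P₁ : Finset t₁.Arc} {P₂ : Finset t₂.Arc}
    {a : t₁.Arc} :
    ((Sum.inl a : (SPTree.series t₁ t₂).Arc) ∈ serUnion P₁ P₂) ↔
      a ∈ P₁ := by
  unfold serUnion
  constructor
  · intro h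
    rcases Finset.mem_union.1 h with h | h
    · obtain ⟨b, hb, hba⟩ := Finset.mem_image.1 h
      cases hba; exact hb
    · obtain ⟨b, hb, hba⟩ := Finset.mem_image.1 h
      cases hba
  · intro h
    exact Finset.mem_union.2 (Or.inl (Finset.mem_image.2 ⟨a, h, rfl⟩))

lemma inr_mem_union_images {t₁ t₂ : SPTree} {P₁ : Finset t₁.Arc} {P₂ : Finset t₂.Arc}
    {b : t₂.Arc} :
    ((Sum.inr b : (SPTree.series t₁ t₂).Arc) ∈ serUnion P₁ P₂) ↔
      b ∈ P₂ := by
  unfold serUnion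
  constructor
  · intro h
    rcases Finset.mem_union.1 h with h | h
    · obtain ⟨c, hc, hcb⟩ := Finset.mem_image.1 h
      cases hcb
    · obtain ⟨c, hc, hcb⟩ := Finset.mem_image.1 h
      cases hcb; exact hc
  · intro h
    exact Finset.mem_union.2 (Or.inr (Finset.mem_image.2 ⟨b, h, rfl⟩))

lemma inl_mem_image_inl {t₁ t₂ : SPTree} {P₁ : Finset t₁.Arc} {a : t₁.Arc} :
    ((Sum.inl a : (SPTree.parallel t₁ t₂).Arc) ∈ parLeft P₁) ↔ a ∈ P₁ := by
  unfold parLeft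
  constructor
  · intro h
    obtain ⟨b, hb, hba⟩ := Finset.mem_image.1 h
    cases hba; exact hb
  · intro h
    exact Finset.mem_image.2 ⟨a, h, rfl⟩

lemma inr_mem_image_inr {t₁ t₂ : SPTree} {P₂ : Finset t₂.Arc} {b : t₂.Arc} :
    ((Sum.inr b : (SPTree.parallel t₁ t₂).Arc) ∈ parRight P₂) ↔ b ∈ P₂ := by
  unfold parRight
  constructor
  · intro h
    obtain ⟨c, hc, hcb⟩ := Finset.mem_image.1 h
    cases hcb; exact hc
  · intro h
    exact Finset.mem_image.2 ⟨b, h, rfl⟩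

lemma inr_not_mem_image_inl {t₁ t₂ : SPTree} {P₁ : Finset t₁.Arc} {b : t₂.Arc} :
    ¬ ((Sum.inr b : (SPTree.parallel t₁ t₂).Arc) ∈ parLeft P₁) := by
  unfold parLeft
  intro h
  obtain ⟨c, hc, hcb⟩ := Finset.mem_image.1 h
  cases hcb

lemma inl_not_mem_image_inr {t₁ t₂ : SPTree} {P₂ : Finset t₂.Arc} {a : t₁.Arc} :
    ¬ ((Sum.inl a : (SPTree.parallel t₁ t₂).Arc) ∈ parRight P₂) := by
  unfold parRight
  intro h
  obtain ⟨c, hc, hcb⟩ := Finset.mem_image.1 h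
  cases hcb

lemma ind_series_inl {t₁ t₂ : SPTree} {P₁ : Finset t₁.Arc} {P₂ : Finset t₂.Arc} {a : t₁.Arc} :
    ind (serUnion P₁ P₂) (Sum.inl a)
      = ind P₁ a := ind_congr inl_mem_union_images

lemma ind_series_inr {t₁ t₂ : SPTree} {P₁ : Finset t₁.Arc} {P₂ : Finset t₂.Arc} {b : t₂.Arc} :
    ind (serUnion P₁ P₂) (Sum.inr b)
      = ind P₂ b := ind_congr inr_mem_union_images

lemma ind_par_ll {t₁ t₂ : SPTree} {P₁ : Finset t₁.Arc} {a : t₁.Arc} :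
    ind (parLeft (t₂ := t₂) P₁) (Sum.inl a) = ind P₁ a :=
  ind_congr inl_mem_image_inl

lemma ind_par_rr {t₁ t₂ : SPTree} {P₂ : Finset t₂.Arc} {b : t₂.Arc} :
    ind (parRight (t₁ := t₁) P₂) (Sum.inr b) = ind P₂ b :=
  ind_congr inr_mem_image_inr

lemma ind_par_rl {t₁ t₂ : SPTree} {P₁ : Finset t₁.Arc} {b : t₂.Arc} :
    ind (parLeft (t₂ := t₂) P₁) (Sum.inr b) = 0 :=
  ind_eq_zero inr_not_mem_image_inl

lemma ind_par_lr {t₁ t₂ : SPTree} {P₂ : Finset t₂.Arc} {a : t₁.Arc} :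
    ind (parRight (t₁ := t₁) P₂) (Sum.inl a) = 0 :=
  ind_eq_zero inl_not_mem_image_inr

lemma paths_nonempty : (t : SPTree) → t.paths.Nonempty
  | .edge => ⟨Finset.univ, Finset.mem_singleton_self _⟩
  | .series t₁ t₂ => by
      obtain ⟨P₁, h₁⟩ := paths_nonempty t₁
      obtain ⟨P₂, h₂⟩ := paths_nonempty t₂
      exact ⟨_, mem_paths_series.2 ⟨P₁, h₁, P₂, h₂, rfl⟩⟩
  | .parallel t₁ t₂ => by
      obtain ⟨P₁, h₁⟩ := paths_nonempty t₁
      exact ⟨_, mem_paths_parallel.2 (Or.inl ⟨P₁, h₁, rfl⟩)⟩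

lemma flow_zero : ∀ (t : SPTree) (x : t.Arc → ℕ), Flow t 0 x → ∀ r, x r = 0
  | .edge, x, h => h
  | .series t₁ t₂, x, h => by
      rintro (a | b)
      · exact flow_zero t₁ _ h.1 a
      · exact flow_zero t₂ _ h.2 b
  | .parallel t₁ t₂, x, h => by
      obtain ⟨m₁, m₂, hm, h₁, h₂⟩ := h
      obtain ⟨rfl, rfl⟩ : m₁ = 0 ∧ m₂ = 0 := by omega
      rintro (a | b)
      · exact flow_zero t₁ _ h₁ a
      · exact flow_zero t₂ _ h₂ b

lemma flow_const_zero : ∀ (t : SPTree), Flow t 0 (fun _ => 0)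
  | .edge => fun _ => rfl
  | .series t₁ t₂ => ⟨flow_const_zero t₁, flow_const_zero t₂⟩
  | .parallel t₁ t₂ => ⟨0, 0, rfl, flow_const_zero t₁, flow_const_zero t₂⟩

lemma flow_congr {t : SPTree} {m : ℕ} {x y : t.Arc → ℕ} (hx : Flow t m x)
    (h : ∀ r, x r = y r) : Flow t m y := by
  have hxy : x = y := funext h
  rw [← hxy]; exact hx

lemma flow_add_path : ∀ (t : SPTree) (m : ℕ) (x : t.Arc → ℕ) (P : Finset t.Arc),
    Flow t m x → P ∈ t.paths → Flow t (m + 1) (fun r => x r + ind P r)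
  | .edge, m, x, P, hx, hP => by
      simp only [SPTree.paths, Finset.mem_singleton] at hP
      intro r
      have hr : r ∈ P := by rw [Finset.mem_singleton.1 hP]; exact Finset.mem_univ r
      simp only [ind_eq_one hr, hx r]
  | .series t₁ t₂, m, x, P, hx, hP => by
      obtain ⟨P₁, h₁, P₂, h₂, rfl⟩ := mem_paths_series.1 hP
      constructor
      · exact flow_congr (flow_add_path t₁ m _ P₁ hx.1 h₁)
          (fun a => by simp only [ind_series_inl])
      · exact flow_congr (flow_add_path t₂ m _ P₂ hx.2 h₂)
          (fun b => by simp only [ind_series_inr])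
  | .parallel t₁ t₂, m, x, P, hx, hP => by
      obtain ⟨m₁, m₂, hm, h₁, h₂⟩ := hx
      rcases mem_paths_parallel.1 hP with ⟨P₁, hP₁, rfl⟩ | ⟨P₂, hP₂, rfl⟩
      · refine ⟨m₁ + 1, m₂, by omega, ?_, ?_⟩
        · exact flow_congr (flow_add_path t₁ m₁ _ P₁ h₁ hP₁)
            (fun a => by simp only [ind_par_ll])
        · exact flow_congr h₂ (fun b => by simp only [ind_par_rl, Nat.add_zero])
      · refine ⟨m₁, m₂ + 1, by omega, ?_, ?_⟩
        · exact flow_congr h₁ (fun a => by simp only [ind_par_lr, Nat.add_zero])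
        · exact flow_congr (flow_add_path t₂ m₂ _ P₂ h₂ hP₂)
            (fun b => by simp only [ind_par_rr])

lemma flow_remove_path : ∀ (t : SPTree) (m : ℕ) (y : t.Arc → ℕ) (P : Finset t.Arc),
    Flow t m y → P ∈ t.paths → (∀ r ∈ P, y r ≠ 0) →
    ∃ m', m = m' + 1 ∧ Flow t m' (fun r => y r - ind P r)
  | .edge, m, y, P, hy, hP, hpos => by
      simp only [SPTree.paths, Finset.mem_singleton] at hP
      have hP := Finset.mem_singleton.1 hP
      subst hP
      have h0 : y (PUnit.unit : (SPTree.edge).Arc) ≠ 0 := hpos _ (Finset.mem_univ _)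
      have h0 : m ≠ 0 := fun hm => h0 ((hy _).trans hm)
      obtain ⟨m', rfl⟩ : ∃ m', m = m' + 1 := ⟨m - 1, by omega⟩
      refine ⟨m', rfl, fun r => ?_⟩
      simp only [ind_eq_one (Finset.mem_univ r), hy r]
      unfold ind
      split
      · omega
      · rename_i hr
        exact absurd (Finset.mem_univ r) hr
  | .series t₁ t₂, m, y, P, hy, hP, hpos => by
      obtain ⟨P₁, h₁, P₂, h₂, rfl⟩ := mem_paths_series.1 hP
      obtain ⟨m₁, hm₁, hf₁⟩ := flow_remove_path t₁ m _ P₁ hy.1 h₁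
        (fun a ha => hpos _ (inl_mem_union_images.2 ha))
      obtain ⟨m₂, hm₂, hf₂⟩ := flow_remove_path t₂ m _ P₂ hy.2 h₂
        (fun b hb => hpos _ (inr_mem_union_images.2 hb))
      have hmm : m₂ = m₁ := by omega
      subst hmm
      refine ⟨m₂, hm₁, ?_, ?_⟩
      · exact flow_congr hf₁ (fun a => by simp only [ind_series_inl])
      · exact flow_congr hf₂ (fun b => by simp only [ind_series_inr])
  | .parallel t₁ t₂, m, y, P, hy, hP, hpos => by
      obtain ⟨m₁, m₂, hm, h₁, h₂⟩ := hy
      rcases mem_paths_parallel.1 hP with ⟨P₁, hP₁, rfl⟩ | ⟨P₂, hP₂, rfl⟩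
      · obtain ⟨m₁', hm₁, hf₁⟩ := flow_remove_path t₁ m₁ _ P₁ h₁ hP₁
          (fun a ha => hpos _ (inl_mem_image_inl.2 ha))
        refine ⟨m₁' + m₂, by omega, m₁', m₂, rfl, ?_, ?_⟩
        · exact flow_congr hf₁ (fun a => by simp only [ind_par_ll])
        · exact flow_congr h₂ (fun b => by simp only [ind_par_rl, Nat.sub_zero])
      · obtain ⟨m₂', hm₂, hf₂⟩ := flow_remove_path t₂ m₂ _ P₂ h₂ hP₂
          (fun b hb => hpos _ (inr_mem_image_inr.2 hb))
        refine ⟨m₁ + m₂', by omega, m₁, m₂', rfl, ?_, ?_⟩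
        · exact flow_congr h₁ (fun a => by simp only [ind_par_lr, Nat.sub_zero])
        · exact flow_congr hf₂ (fun b => by simp only [ind_par_rr])

lemma flow_exists_incr_path : ∀ (t : SPTree) (m k : ℕ) (x y : t.Arc → ℕ),
    Flow t m x → Flow t k y → m < k → ∃ P ∈ t.paths, ∀ r ∈ P, x r < y r
  | .edge, m, k, x, y, hx, hy, hmk =>
      ⟨Finset.univ, Finset.mem_singleton_self _,
        fun r _ => by rw [hx r, hy r]; exact hmk⟩
  | .series t₁ t₂, m, k, x, y, hx, hy, hmk => by
      obtain ⟨P₁, hP₁, h₁⟩ := flow_exists_incr_path t₁ m k _ _ hx.1 hy.1 hmk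
      obtain ⟨P₂, hP₂, h₂⟩ := flow_exists_incr_path t₂ m k _ _ hx.2 hy.2 hmk
      refine ⟨_, mem_paths_series.2 ⟨P₁, hP₁, P₂, hP₂, rfl⟩, ?_⟩
      rintro (a | b) hr
      · exact h₁ a (inl_mem_union_images.1 hr)
      · exact h₂ b (inr_mem_union_images.1 hr)
  | .parallel t₁ t₂, m, k, x, y, hx, hy, hmk => by
      obtain ⟨m₁, m₂, hm, hx₁, hx₂⟩ := hx
      obtain ⟨k₁, k₂, hk, hy₁, hy₂⟩ := hy
      rcases (by omega : m₁ < k₁ ∨ m₂ < k₂) with h | h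
      · obtain ⟨P₁, hP₁, h₁⟩ := flow_exists_incr_path t₁ m₁ k₁ _ _ hx₁ hy₁ h
        refine ⟨_, mem_paths_parallel.2 (Or.inl ⟨P₁, hP₁, rfl⟩), ?_⟩
        rintro (a | b) hr
        · exact h₁ a (inl_mem_image_inl.1 hr)
        · exact absurd hr inr_not_mem_image_inl
      · obtain ⟨P₂, hP₂, h₂⟩ := flow_exists_incr_path t₂ m₂ k₂ _ _ hx₂ hy₂ h
        refine ⟨_, mem_paths_parallel.2 (Or.inr ⟨P₂, hP₂, rfl⟩), ?_⟩
        rintro (a | b) hr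
        · exact absurd hr inl_not_mem_image_inr
        · exact h₂ b (inr_mem_image_inr.1 hr)

end SPGames

namespace SPGames

open Finset

variable {t : SPTree}

/-- Congestion vector of a profile. -/
def cong {n : ℕ} (t : SPTree) (A : Fin n → Finset t.Arc) (r : t.Arc) : ℕ :=
  ∑ i, ind (A i) r

lemma cong_eq_congestion {n : ℕ} (d : t.Arc → ℕ → ℝ) (A : Fin n → Finset t.Arc) :
    (SNCGsp t d n).congestion A = cong t A := by
  funext r
  rw [CGame.congestion, Finset.card_filter]
  rfl

lemma cong_cons {n : ℕ} (P : Finset t.Arc) (A : Fin n → Finset t.Arc) (r : t.Arc) :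
    cong t (Fin.cons P A) r = ind P r + cong t A r := by
  rw [cong, Fin.sum_univ_succ]
  simp [cong, Fin.cons_succ]

lemma cong_succ {n : ℕ} (A : Fin (n + 1) → Finset t.Arc) (r : t.Arc) :
    cong t A r = ind (A 0) r + cong t (Fin.tail A) r := by
  rw [cong, Fin.sum_univ_succ]; rfl

lemma cong_snoc {n : ℕ} (A : Fin n → Finset t.Arc) (P : Finset t.Arc) (r : t.Arc) :
    cong t (Fin.snoc A P) r = cong t A r + ind P r := by
  rw [cong, Fin.sum_univ_castSucc]
  simp [cong, Fin.snoc_castSucc, Fin.snoc_last]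

lemma flow_of_profile {n : ℕ} (A : Fin n → Finset t.Arc) (hA : ∀ i, A i ∈ t.paths) :
    Flow t n (cong t A) := by
  induction n with
  | zero =>
      exact flow_congr (flow_const_zero t) (fun r => by simp [cong])
  | succ n ih =>
      have h := flow_add_path t n (cong t (Fin.tail A)) (A 0)
        (ih (Fin.tail A) (fun i => hA i.succ)) (hA 0)
      exact flow_congr h (fun r => by rw [cong_succ]; omega)

lemma profile_of_flow {n : ℕ} {x : t.Arc → ℕ} (hx : Flow t n x) :
    ∃ A : Fin n → Finset t.Arc, (∀ i, A i ∈ t.paths) ∧ ∀ r, x r = cong t A r := by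
  induction n generalizing x with
  | zero =>
      exact ⟨fun i => i.elim0, fun i => i.elim0,
        fun r => by rw [flow_zero t x hx r]; simp [cong]⟩
  | succ n ih =>
      obtain ⟨P, hP, hPx⟩ := flow_exists_incr_path t 0 (n + 1) _ x (flow_const_zero t) hx
        (Nat.succ_pos n)
      have hne : ∀ r ∈ P, x r ≠ 0 := fun r hr => by have := hPx r hr; omega
      obtain ⟨m', hm', hflow⟩ := flow_remove_path t (n + 1) x P hx hP hne
      obtain rfl : m' = n := by omega
      obtain ⟨A', hA', hcong⟩ := ih hflow
      refine ⟨Fin.cons P A', ?_, ?_⟩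
      · intro i
        refine Fin.cases hP (fun j => by rw [Fin.cons_succ]; exact hA' j) i
      · intro r
        rw [cong_cons, ← hcong r]
        by_cases h : r ∈ P
        · have := hne r h; rw [ind_eq_one h]; omega
        · rw [ind_eq_zero h]; omega

/-- Rosenthal potential as a function of the congestion vector. -/
noncomputable def Phi (t : SPTree) (d : t.Arc → ℕ → ℝ) (x : t.Arc → ℕ) : ℝ :=
  ∑ r, ∑ i ∈ Finset.Icc 1 (x r), d r i

lemma potential_eq_Phi {n : ℕ} (d : t.Arc → ℕ → ℝ) (A : Fin n → Finset t.Arc) :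
    (SNCGsp t d n).potential A = Phi t d (cong t A) := by
  rw [CGame.potential, Phi, cong_eq_congestion d A]
  rfl

lemma Phi_add_path (d : t.Arc → ℕ → ℝ) (x : t.Arc → ℕ) (P : Finset t.Arc) :
    Phi t d (fun r => x r + ind P r) = Phi t d x + ∑ r ∈ P, d r (x r + 1) := by
  rw [Phi, Phi]
  have : ∀ r : t.Arc, ∑ i ∈ Finset.Icc 1 (x r + ind P r), d r i
      = (∑ i ∈ Finset.Icc 1 (x r), d r i) + (if r ∈ P then d r (x r + 1) else 0) := by
    intro r
    by_cases h : r ∈ P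
    · rw [ind_eq_one h, if_pos h, Finset.sum_Icc_succ_top (by omega)]
    · rw [ind_eq_zero h, if_neg h, Nat.add_zero, add_zero]
  rw [Finset.sum_congr rfl (fun r _ => this r), Finset.sum_add_distrib]
  congr 1
  rw [Finset.sum_ite_mem, Finset.univ_inter]

lemma Phi_sub_path (d : t.Arc → ℕ → ℝ) (x : t.Arc → ℕ) (P : Finset t.Arc)
    (h : ∀ r ∈ P, x r ≠ 0) :
    Phi t d x = Phi t d (fun r => x r - ind P r) + ∑ r ∈ P, d r (x r) := by
  have h1 : Phi t d (fun r => (x r - ind P r) + ind P r)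
      = Phi t d (fun r => x r - ind P r) + ∑ r ∈ P, d r ((x r - ind P r) + 1) :=
    Phi_add_path d _ P
  have h2 : (fun r => (x r - ind P r) + ind P r) = x := by
    funext r
    by_cases hr : r ∈ P
    · have := h r hr; rw [ind_eq_one hr]; omega
    · rw [ind_eq_zero hr]
      omega
  have h3 : ∀ r ∈ P, (x r - ind P r) + 1 = x r := by
    intro r hr
    have := h r hr; rw [ind_eq_one hr]; omega
  rw [h2] at h1
  rw [h1, Finset.sum_congr rfl (fun r hr => by rw [h3 r hr])]

/-- Minimizers of the potential over flows of value `m`. -/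
def MinFlow (t : SPTree) (d : t.Arc → ℕ → ℝ) (m : ℕ) (x : t.Arc → ℕ) : Prop :=
  Flow t m x ∧ ∀ y, Flow t m y → Phi t d x ≤ Phi t d y

lemma exists_minflow (d : t.Arc → ℕ → ℝ) (m : ℕ) : ∃ x, MinFlow t d m x := by
  obtain ⟨P₀, hP₀⟩ := paths_nonempty t
  have hne : (Fintype.piFinset fun _ : Fin m => t.paths).Nonempty :=
    ⟨fun _ => P₀, by simp [Fintype.mem_piFinset, hP₀]⟩
  obtain ⟨A, hA, hmin⟩ := Finset.exists_min_image _ (fun A => Phi t d (cong t A)) hne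
  refine ⟨cong t A, flow_of_profile A (fun i => (Fintype.mem_piFinset.1 hA) i), ?_⟩
  intro y hy
  obtain ⟨B, hB, hyB⟩ := profile_of_flow hy
  have : y = cong t B := funext hyB
  rw [this]
  exact hmin B (Fintype.mem_piFinset.2 hB)

end SPGames

namespace SPGames

open Finset

variable {t : SPTree}

lemma greedy_step {d : t.Arc → ℕ → ℝ} (hmono : ∀ r, Monotone (d r)) {m : ℕ}
    {x : t.Arc → ℕ} {P : Finset t.Arc} (hx : MinFlow t d m x) (hP : P ∈ t.paths)
    (hg : ∀ a ∈ t.paths, ∑ r ∈ P, d r (x r + 1) ≤ ∑ r ∈ a, d r (x r + 1)) :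
    MinFlow t d (m + 1) (fun r => x r + ind P r) := by
  refine ⟨flow_add_path t m x P hx.1 hP, ?_⟩
  intro y hy
  obtain ⟨Q, hQ, hxy⟩ := flow_exists_incr_path t m (m + 1) x y hx.1 hy (Nat.lt_succ_self m)
  have hyne : ∀ r ∈ Q, y r ≠ 0 := fun r hr => by have := hxy r hr; omega
  obtain ⟨m', hm', hflow⟩ := flow_remove_path t (m + 1) y Q hy hQ hyne
  obtain rfl : m' = m := by omega
  have hsplit : Phi t d y = Phi t d (fun r => y r - ind Q r) + ∑ r ∈ Q, d r (y r) :=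
    Phi_sub_path d y Q hyne
  have h1 : Phi t d x ≤ Phi t d (fun r => y r - ind Q r) := hx.2 _ hflow
  have h2 : ∑ r ∈ Q, d r (x r + 1) ≤ ∑ r ∈ Q, d r (y r) :=
    Finset.sum_le_sum (fun r hr => hmono r (hxy r hr))
  have h3 : ∑ r ∈ P, d r (x r + 1) ≤ ∑ r ∈ Q, d r (x r + 1) := hg Q hQ
  rw [Phi_add_path d x P, hsplit]
  linarith

lemma min_step_down {d : t.Arc → ℕ → ℝ} (hmono : ∀ r, Monotone (d r)) {m : ℕ}
    {y : t.Arc → ℕ} (hy : MinFlow t d (m + 1) y) :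
    ∃ Q ∈ t.paths, ∃ x, MinFlow t d m x ∧ (∀ r, y r = x r + ind Q r) ∧
      ∀ a ∈ t.paths, ∑ r ∈ Q, d r (x r + 1) ≤ ∑ r ∈ a, d r (x r + 1) := by
  obtain ⟨x₀, hx₀⟩ := exists_minflow (t := t) d m
  obtain ⟨Q, hQ, hxy⟩ := flow_exists_incr_path t m (m + 1) x₀ y hx₀.1 hy.1 (Nat.lt_succ_self m)
  have hyne : ∀ r ∈ Q, y r ≠ 0 := fun r hr => by have := hxy r hr; omega
  obtain ⟨m', hm', hflow⟩ := flow_remove_path t (m + 1) y Q hy.1 hQ hyne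
  have hmm : m' = m := by omega
  subst hmm
  have hyx : ∀ r, y r = (y r - ind Q r) + ind Q r := by
    intro r
    by_cases hr : r ∈ Q
    · have := hyne r hr; rw [ind_eq_one hr]; omega
    · rw [ind_eq_zero hr]; omega
  have hx1 : ∀ r ∈ Q, (y r - ind Q r) + 1 = y r := by
    intro r hr
    have := hyne r hr
    rw [ind_eq_one hr]; omega
  have hsplit : Phi t d y = Phi t d (fun r => y r - ind Q r) + ∑ r ∈ Q, d r (y r) :=
    Phi_sub_path d y Q hyne
  have hxmin : MinFlow t d m' (fun r => y r - ind Q r) := by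
    refine ⟨hflow, fun z hz => ?_⟩
    have hx0Q : Flow t (m' + 1) (fun r => x₀ r + ind Q r) := flow_add_path t m' x₀ Q hx₀.1 hQ
    have hyle : Phi t d y ≤ Phi t d (fun r => x₀ r + ind Q r) := hy.2 _ hx0Q
    rw [Phi_add_path d x₀ Q] at hyle
    have h2 : ∑ r ∈ Q, d r (x₀ r + 1) ≤ ∑ r ∈ Q, d r (y r) :=
      Finset.sum_le_sum (fun r hr => hmono r (hxy r hr))
    have hxx0 : Phi t d (fun r => y r - ind Q r) ≤ Phi t d x₀ := by linarith [hsplit]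
    exact le_trans hxx0 (hx₀.2 z hz)
  refine ⟨Q, hQ, fun r => y r - ind Q r, hxmin, hyx, ?_⟩
  intro a ha
  have hxa : Flow t (m' + 1) (fun r => (y r - ind Q r) + ind a r) :=
    flow_add_path t m' _ a hflow ha
  have hle := hy.2 _ hxa
  rw [Phi_add_path d _ a] at hle
  have hQsum : ∑ r ∈ Q, d r ((y r - ind Q r) + 1) = ∑ r ∈ Q, d r (y r) :=
    Finset.sum_congr rfl (fun r hr => by rw [hx1 r hr])
  linarith [hsplit]

/-- Greedy (1-lookahead) play, recursively: under accumulated load `ℓ`, the next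
player picks a best path, and play continues. -/
def GreedyRec (t : SPTree) (d : t.Arc → ℕ → ℝ) :
    (n : ℕ) → (ℓ : t.Arc → ℕ) → (Fin n → Finset t.Arc) → Prop
  | 0, _, _ => True
  | n + 1, ℓ, A =>
      (A 0 ∈ t.paths ∧ ∀ a ∈ t.paths,
        ∑ r ∈ A 0, d r (ℓ r + 1) ≤ ∑ r ∈ a, d r (ℓ r + 1)) ∧
      GreedyRec t d n (fun r => ℓ r + ind (A 0) r) (Fin.tail A)

lemma greedyRec_succ_iff {d : t.Arc → ℕ → ℝ} {n : ℕ} {ℓ : t.Arc → ℕ}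
    {A : Fin (n + 1) → Finset t.Arc} :
    GreedyRec t d (n + 1) ℓ A ↔
      (A 0 ∈ t.paths ∧ ∀ a ∈ t.paths,
        ∑ r ∈ A 0, d r (ℓ r + 1) ≤ ∑ r ∈ a, d r (ℓ r + 1)) ∧
      GreedyRec t d n (fun r => ℓ r + ind (A 0) r) (Fin.tail A) := Iff.rfl

lemma tail_snoc' {n : ℕ} {α : Type} (B : Fin (n + 1) → α) (Q : α) :
    Fin.tail (Fin.snoc B Q : Fin (n + 2) → α) = Fin.snoc (Fin.tail B) Q := by
  funext i
  refine Fin.lastCases ?_ (fun j => ?_) i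
  · rw [Fin.snoc_last, Fin.tail]
    simp only [Fin.succ_last, Fin.snoc_last]
  · rw [Fin.snoc_castSucc, Fin.tail, Fin.tail]
    simp only [Fin.succ_castSucc, Fin.snoc_castSucc]

lemma greedy_snoc (d : t.Arc → ℕ → ℝ) :
    ∀ (n : ℕ) (ℓ : t.Arc → ℕ) (B : Fin n → Finset t.Arc) (Q : Finset t.Arc),
    GreedyRec t d (n + 1) ℓ (Fin.snoc B Q) ↔
      GreedyRec t d n ℓ B ∧ (Q ∈ t.paths ∧ ∀ a ∈ t.paths,
        ∑ r ∈ Q, d r (ℓ r + cong t B r + 1) ≤ ∑ r ∈ a, d r (ℓ r + cong t B r + 1))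
  | 0, ℓ, B, Q => by
      have h0 : (Fin.snoc B Q : Fin 1 → Finset t.Arc) 0 = Q := by
        rw [show (0 : Fin 1) = Fin.last 0 from rfl, Fin.snoc_last]
      rw [greedyRec_succ_iff, h0]
      have hc : ∀ r, ℓ r + cong t B r = ℓ r := fun r => by simp [cong]
      constructor
      · rintro ⟨⟨h1, h2⟩, -⟩
        exact ⟨trivial, h1, fun a ha => by simpa only [hc] using h2 a ha⟩
      · rintro ⟨-, h1, h2⟩
        exact ⟨⟨h1, fun a ha => by simpa only [hc] using h2 a ha⟩, trivial⟩
  | n + 1, ℓ, B, Q => by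
      have h0 : (Fin.snoc B Q : Fin (n + 2) → Finset t.Arc) 0 = B 0 := by
        rw [show (0 : Fin (n + 2)) = Fin.castSucc 0 from rfl, Fin.snoc_castSucc]
      rw [greedyRec_succ_iff, greedyRec_succ_iff (A := B), tail_snoc', h0,
        greedy_snoc d n (fun r => ℓ r + ind (B 0) r) (Fin.tail B) Q]
      have hc : ∀ r, (ℓ r + ind (B 0) r) + cong t (Fin.tail B) r = ℓ r + cong t B r := by
        intro r
        rw [cong_succ B r]
        omega
      constructor
      · rintro ⟨hhead, htail, hQ, hg⟩
        exact ⟨⟨hhead, htail⟩, hQ, fun a ha => by simpa only [hc] using hg a ha⟩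
      · rintro ⟨⟨hhead, htail⟩, hQ, hg⟩
        exact ⟨hhead, htail, hQ, fun a ha => by simpa only [hc] using hg a ha⟩

/-- Direction 1: a greedy outcome's congestion minimizes the potential. -/
lemma greedy_minflow {d : t.Arc → ℕ → ℝ} (hmono : ∀ r, Monotone (d r)) :
    ∀ (n : ℕ) (B : Fin n → Finset t.Arc), GreedyRec t d n (fun _ => 0) B →
      MinFlow t d n (cong t B)
  | 0, B, _ => by
      refine ⟨flow_congr (flow_const_zero t) (fun r => by simp [cong]), ?_⟩
      intro y hy
      have : y = cong t B := funext fun r => by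
        rw [flow_zero t y hy r]; simp [cong]
      rw [this]
  | n + 1, B, hB => by
      have hsnoc : B = Fin.snoc (Fin.init B) (B (Fin.last n)) := (Fin.snoc_init_self B).symm
      have hB' : GreedyRec t d (n + 1) (fun _ => 0)
          (Fin.snoc (Fin.init B) (B (Fin.last n))) := by
        rw [Fin.snoc_init_self]; exact hB
      rw [greedy_snoc d n (fun _ => 0) (Fin.init B) (B (Fin.last n))] at hB'
      obtain ⟨hgB, hQ, hg⟩ := hB'
      have ih := greedy_minflow hmono n (Fin.init B) hgB
      have hstep := greedy_step hmono ih hQ (by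
        intro a ha
        have := hg a ha
        simpa only [Nat.zero_add] using this)
      have hcong : ∀ r, cong t B r = cong t (Fin.init B) r + ind (B (Fin.last n)) r := by
        intro r
        conv_lhs => rw [hsnoc]
        rw [cong_snoc]
      refine ⟨flow_congr hstep.1 (fun r => (hcong r).symm), fun y hy => ?_⟩
      have h1 : cong t B = fun r => cong t (Fin.init B) r + ind (B (Fin.last n)) r :=
        funext hcong
      rw [h1]
      exact hstep.2 y hy

/-- Direction 2: every potential-minimizing congestion is realized by greedy play. -/
lemma minflow_greedy {d : t.Arc → ℕ → ℝ} (hmono : ∀ r, Monotone (d r)) :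
    ∀ (n : ℕ) (x : t.Arc → ℕ), MinFlow t d n x →
      ∃ B : Fin n → Finset t.Arc, GreedyRec t d n (fun _ => 0) B ∧ ∀ r, x r = cong t B r
  | 0, x, hx => by
      refine ⟨fun i => i.elim0, trivial, fun r => ?_⟩
      rw [flow_zero t x hx.1 r]; simp [cong]
  | n + 1, x, hx => by
      obtain ⟨Q, hQ, x', hx', hdecomp, hg⟩ := min_step_down hmono hx
      obtain ⟨B', hB', hcong⟩ := minflow_greedy hmono n x' hx'
      refine ⟨Fin.snoc B' Q, ?_, ?_⟩
      · rw [greedy_snoc d n (fun _ => 0) B' Q]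
        refine ⟨hB', hQ, fun a ha => ?_⟩
        have := hg a ha
        have he : ∀ r, (0 : ℕ) + cong t B' r + 1 = x' r + 1 := fun r => by
          rw [← hcong r]; omega
        simpa only [he] using this
      · intro r
        rw [cong_snoc, ← hcong r, ← hdecomp r]

end SPGames

namespace SPGames

open Finset

variable {t : SPTree}

/-- The symmetric network congestion game on `t` with accumulated load `ℓ`. -/
def loadedGame (t : SPTree) (d : t.Arc → ℕ → ℝ) (n : ℕ) (ℓ : t.Arc → ℕ) : CGame t.Arc n where
  actions := fun _ => t.paths
  delay := fun r y => d r (y + ℓ r)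

lemma loaded_subgame (d : t.Arc → ℕ → ℝ) (n : ℕ) (ℓ : t.Arc → ℕ) (a : Finset t.Arc) :
    (loadedGame t d (n + 1) ℓ).subgame a = loadedGame t d n (fun r => ℓ r + ind a r) := by
  simp only [CGame.subgame, loadedGame, CGame.mk.injEq]
  refine ⟨trivial, ?_⟩
  funext r y
  congr 1
  by_cases h : r ∈ a
  · rw [if_pos h, ind_eq_one h]; omega
  · rw [if_neg h, ind_eq_zero h]; omega

/-- Characterization of subgame-perfect outcomes of one-player games. -/
lemma isSPO_one {R : Type} [DecidableEq R] [Fintype R] {m : ℕ} (hm : m = 1)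
    (G : CGame R m) (B : Fin m → Finset R) :
    CGame.IsSPO G B ↔ ∀ i : Fin m, B i ∈ G.actions i ∧
      ∀ a ∈ G.actions i, (∑ r ∈ B i, G.delay r 1) ≤ ∑ r ∈ a, G.delay r 1 := by
  subst hm
  have hcost : ∀ (a : Finset R) (f : Fin 0 → Finset R),
      G.cost (Fin.cons a f) 0 = ∑ r ∈ a, G.delay r 1 := by
    intro a f
    rw [CGame.cost, Fin.cons_zero]
    refine Finset.sum_congr rfl (fun r hr => ?_)
    congr 1
    rw [CGame.congestion, Finset.card_filter, Fin.sum_univ_one, Fin.cons_zero, if_pos hr]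
  constructor
  · rintro ⟨hB0, f, -, -, hmin⟩
    intro i
    have hi : i = 0 := Subsingleton.elim i 0
    subst hi
    refine ⟨hB0, fun a ha => ?_⟩
    have := hmin a ha
    rwa [hcost, hcost] at this
  · intro h
    refine ⟨(h 0).1, fun _ => (fun i => i.elim0), fun a _ => trivial,
      funext (fun i => i.elim0), fun a ha => ?_⟩
    rw [hcost, hcost]
    exact (h 0).2 a ha

lemma isKLA_succ_iff {R : Type} [DecidableEq R] [Fintype R] {k n : ℕ}
    (G : CGame R (n + 1)) (A : Fin (n + 1) → Finset R) :
    CGame.IsKLA k G A ↔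
      ((∃ (hk : 0 < min k (n + 1)) (B : Fin (min k (n + 1)) → Finset R),
          CGame.IsSPO (G.truncate k) B ∧ B ⟨0, hk⟩ = A 0) ∧
        CGame.IsKLA k (G.subgame (A 0)) (Fin.tail A)) := Iff.rfl

lemma isKLA_iff_greedy (d : t.Arc → ℕ → ℝ) :
    ∀ (n : ℕ) (ℓ : t.Arc → ℕ) (A : Fin n → Finset t.Arc),
      CGame.IsKLA 1 (loadedGame t d n ℓ) A ↔ GreedyRec t d n ℓ A
  | 0, ℓ, A => Iff.rfl
  | n + 1, ℓ, A => by
      rw [isKLA_succ_iff, greedyRec_succ_iff, loaded_subgame d n ℓ (A 0),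
        isKLA_iff_greedy d n (fun r => ℓ r + ind (A 0) r) (Fin.tail A)]
      have hmin1 : min 1 (n + 1) = 1 := by omega
      have hdel : ∀ (x : t.Arc → ℕ) (P : Finset t.Arc),
          ∑ r ∈ P, ((loadedGame t d (n + 1) ℓ).truncate 1).delay r 1
            = ∑ r ∈ P, d r (ℓ r + 1) := by
        intro x P
        refine Finset.sum_congr rfl (fun r hr => ?_)
        show d r (1 + ℓ r) = d r (ℓ r + 1)
        rw [Nat.add_comm]
      constructor
      · rintro ⟨⟨hk, B, hSPO, hB0⟩, htail⟩
        refine ⟨?_, htail⟩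
        have hchar := (isSPO_one hmin1 _ B).1 hSPO ⟨0, hk⟩
        rw [hB0] at hchar
        obtain ⟨h1, h2⟩ := hchar
        refine ⟨h1, fun a ha => ?_⟩
        have := h2 a ha
        rwa [hdel (fun _ => 0) (A 0), hdel (fun _ => 0) a] at this
      · rintro ⟨⟨h1, h2⟩, htail⟩
        refine ⟨⟨by omega, fun _ => A 0, ?_, rfl⟩, htail⟩
        rw [isSPO_one hmin1]
        intro i
        refine ⟨h1, fun a ha => ?_⟩
        rw [hdel (fun _ => 0) (A 0), hdel (fun _ => 0) a]
        exact h2 a ha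
  
end SPGames

namespace SPGames

variable {t : SPTree}

lemma cong_comp_perm {n : ℕ} (B : Fin n → Finset t.Arc) (σ : Equiv.Perm (Fin n)) :
    cong t (B ∘ σ) = cong t B := by
  funext r
  exact Equiv.sum_comp σ (fun i => ind (B i) r)

lemma minflow_of_min_outcome (d : t.Arc → ℕ → ℝ) {n : ℕ} (A : Fin n → Finset t.Arc)
    (hA : CGame.IsOutcome (SNCGsp t d n) A)
    (hmin : ∀ B, CGame.IsOutcome (SNCGsp t d n) B →
      CGame.potential (SNCGsp t d n) A ≤ CGame.potential (SNCGsp t d n) B) :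
    MinFlow t d n (cong t A) := by
  refine ⟨flow_of_profile A hA, fun y hy => ?_⟩
  obtain ⟨A', hA', hy'⟩ := profile_of_flow hy
  have hyA : y = cong t A' := funext hy'
  rw [hyA, ← potential_eq_Phi, ← potential_eq_Phi]
  exact hmin A' hA'

lemma isKLO_of_greedy (d : t.Arc → ℕ → ℝ) {n : ℕ} (B : Fin n → Finset t.Arc)
    (hg : GreedyRec t d n (fun _ => 0) B) : CGame.IsKLO 1 (SNCGsp t d n) B := by
  refine ⟨1, ?_⟩
  show CGame.IsKLA 1 (loadedGame t d n (fun _ => 0)) B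
  exact (isKLA_iff_greedy d n (fun _ => 0) B).2 hg

lemma greedy_of_isKLO (d : t.Arc → ℕ → ℝ) {n : ℕ} (B : Fin n → Finset t.Arc)
    (h : CGame.IsKLO 1 (SNCGsp t d n) B) :
    ∃ σ : Equiv.Perm (Fin n), GreedyRec t d n (fun _ => 0) (B ∘ σ) := by
  obtain ⟨σ, hσ⟩ := h
  refine ⟨σ, ?_⟩
  exact (isKLA_iff_greedy d n (fun _ => 0) (B ∘ σ)).1 hσ

end SPGames

/-- In an SNCG on a series-parallel graph, every global minimizer of
Rosenthal's potential has the same congestion vector as some 1-lookahead outcome;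
consequently the congestion vectors of 1-lookahead outcomes are exactly the congestion
vectors of global minimizers of the potential. -/
theorem sp_potential_minimizers_congestion (t : SPTree) (d : t.Arc → ℕ → ℝ)
    (hmono : ∀ r, Monotone (d r)) (hnonneg : ∀ r m, 0 ≤ d r m) (n : ℕ) :
    (∀ A : Fin n → Finset t.Arc, CGame.IsOutcome (SNCGsp t d n) A →
      (∀ B, CGame.IsOutcome (SNCGsp t d n) B →
        CGame.potential (SNCGsp t d n) A ≤ CGame.potential (SNCGsp t d n) B) →
      ∃ B, CGame.IsKLO 1 (SNCGsp t d n) B ∧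
        CGame.congestion (SNCGsp t d n) B = CGame.congestion (SNCGsp t d n) A) ∧
    {x : t.Arc → ℕ | ∃ B, CGame.IsKLO 1 (SNCGsp t d n) B ∧
        x = CGame.congestion (SNCGsp t d n) B} =
      {x : t.Arc → ℕ | ∃ A, CGame.IsOutcome (SNCGsp t d n) A ∧
        (∀ B, CGame.IsOutcome (SNCGsp t d n) B →
          CGame.potential (SNCGsp t d n) A ≤ CGame.potential (SNCGsp t d n) B) ∧
        x = CGame.congestion (SNCGsp t d n) A} := by
  classical
  open SPGames in
  have key : ∀ A : Fin n → Finset t.Arc, CGame.IsOutcome (SNCGsp t d n) A →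
      (∀ B, CGame.IsOutcome (SNCGsp t d n) B →
        CGame.potential (SNCGsp t d n) A ≤ CGame.potential (SNCGsp t d n) B) →
      ∃ B, CGame.IsKLO 1 (SNCGsp t d n) B ∧
        CGame.congestion (SNCGsp t d n) B = CGame.congestion (SNCGsp t d n) A := by
    intro A hA hmin
    have hmf : MinFlow t d n (cong t A) := minflow_of_min_outcome d A hA hmin
    obtain ⟨B, hgB, hcB⟩ := minflow_greedy hmono n _ hmf
    refine ⟨B, isKLO_of_greedy d B hgB, ?_⟩
    rw [cong_eq_congestion d, cong_eq_congestion d]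
    exact (funext hcB).symm
  refine ⟨key, ?_⟩
  ext x
  simp only [Set.mem_setOf_eq]
  constructor
  · rintro ⟨B, hKLO, rfl⟩
    obtain ⟨σ, hg⟩ := greedy_of_isKLO d B hKLO
    have hmf : MinFlow t d n (cong t (B ∘ σ)) := greedy_minflow hmono n _ hg
    obtain ⟨A, hA, hxA⟩ := profile_of_flow hmf.1
    refine ⟨A, hA, ?_, ?_⟩
    · intro B' hB'
      rw [potential_eq_Phi, potential_eq_Phi]
      have h1 : cong t A = cong t (B ∘ σ) := (funext hxA).symm
      rw [h1]
      exact hmf.2 _ (flow_of_profile B' hB')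
    · rw [cong_eq_congestion d, cong_eq_congestion d, ← cong_comp_perm B σ]
      exact funext hxA
  · rintro ⟨A, hA, hmin, rfl⟩
    obtain ⟨B, hKLO, hcong⟩ := key A hA hmin
    exact ⟨B, hKLO, hcong.symm⟩
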